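/- Let a ≤ b be positive coprime integers with a ≥ 2 and suppose b/a gives exactly the set H' = {(s+1)/a + (t+1)/b < 1 : s,t ∈ ℕ} with at least 3 elements. Then the three smallest elements ξ < ψ < ζ of the full set H = {(s+1)/a + (t+1)/b : s,t ∈ ℕ} satisfy: ξ = 1/a + 1/b, ψ = 1/a + 2/b, and a = 1/(2ξ − ψ). -/

import Mathlib

theorem stmt_13 (a b : ℕ) (ha : 2 ≤ a) (hab : a ≤ b) (hcop : Nat.Coprime a b)
    (h3 : 3 ≤ {x : ℚ | (∃ s t : ℕ, x = ((s : ℚ) + 1) / a + ((t : ℚ) + 1) / b) ∧ x < 1}.ncard)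
    (ξ ψ ζ : ℚ)
    (hξ : ξ ∈ {x : ℚ | ∃ s t : ℕ, x = ((s : ℚ) + 1) / a + ((t : ℚ) + 1) / b})
    (hψ : ψ ∈ {x : ℚ | ∃ s t : ℕ, x = ((s : ℚ) + 1) / a + ((t : ℚ) + 1) / b})
    (hζ : ζ ∈ {x : ℚ | ∃ s t : ℕ, x = ((s : ℚ) + 1) / a + ((t : ℚ) + 1) / b})
    (hord : ξ < ψ ∧ ψ < ζ)
    (hξmin : ∀ x ∈ {x : ℚ | ∃ s t : ℕ, x = ((s : ℚ) + 1) / a + ((t : ℚ) + 1) / b}, ξ ≤ x)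
    (hψmin : ∀ x ∈ {x : ℚ | ∃ s t : ℕ, x = ((s : ℚ) + 1) / a + ((t : ℚ) + 1) / b},
      x ≠ ξ → ψ ≤ x)
    (hζmin : ∀ x ∈ {x : ℚ | ∃ s t : ℕ, x = ((s : ℚ) + 1) / a + ((t : ℚ) + 1) / b},
      x ≠ ξ → x ≠ ψ → ζ ≤ x) :
    ξ = 1 / a + 1 / b ∧ ψ = 1 / a + 2 / b ∧ (a : ℚ) = 1 / (2 * ξ - ψ) := by
  have hlt : a < b := by
    rcases lt_or_eq_of_le hab with h | h
    · exact h
    · exfalso; subst h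
      simp [Nat.Coprime, Nat.gcd_self] at hcop
      omega
  have haQ : (0:ℚ) < a := by exact_mod_cast (by omega : 0 < a)
  have hbQ : (0:ℚ) < b := by exact_mod_cast (by omega : 0 < b)
  have habQ : (a:ℚ) < b := by exact_mod_cast hlt
  -- ξ = 1/a + 1/b
  have hmem1 : (1/a + 1/b : ℚ) ∈ {x : ℚ | ∃ s t : ℕ, x = ((s : ℚ) + 1) / a + ((t : ℚ) + 1) / b} :=
    ⟨0, 0, by push_cast; ring⟩
  have hξeq : ξ = 1/a + 1/b := by
    obtain ⟨s, t, hst⟩ := hξ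
    have h1 := hξmin _ hmem1
    have hs0 : (0:ℚ) ≤ s := Nat.cast_nonneg s
    have ht0 : (0:ℚ) ≤ t := Nat.cast_nonneg t
    have h2 : (1:ℚ)/a + 1/b ≤ ((s : ℚ) + 1) / a + ((t : ℚ) + 1) / b := by
      gcongr <;> linarith
    linarith [hst ▸ h2, h1]
  -- any element ≠ ξ is ≥ 1/a + 2/b
  have key : ∀ s t : ℕ, ((s : ℚ) + 1) / a + ((t : ℚ) + 1) / b ≠ ξ →
      (1:ℚ)/a + 2/b ≤ ((s : ℚ) + 1) / a + ((t : ℚ) + 1) / b := by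
    intro s t hne
    have hst : ¬ (s = 0 ∧ t = 0) := by
      rintro ⟨rfl, rfl⟩
      apply hne
      rw [hξeq]; push_cast; ring
    rcases Nat.eq_zero_or_pos t with ht | ht
    · have hs : 1 ≤ s := by omega
      have hsQ : (1:ℚ) ≤ s := by exact_mod_cast hs
      have h1 : (2:ℚ)/a ≤ ((s : ℚ) + 1) / a := by gcongr; linarith
      have ht0 : (0:ℚ) ≤ t := Nat.cast_nonneg t
      have h2 : (1:ℚ)/b ≤ ((t : ℚ) + 1) / b := by gcongr; linarith
      have h3 : (1:ℚ)/b < 1/a := by gcongr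
      have e1 : (2:ℚ)/a = 1/a + 1/a := by ring
      have e2 : (2:ℚ)/b = 1/b + 1/b := by ring
      linarith
    · have htQ : (1:ℚ) ≤ t := by exact_mod_cast ht
      have hs0 : (0:ℚ) ≤ s := Nat.cast_nonneg s
      have h1 : (1:ℚ)/a ≤ ((s : ℚ) + 1) / a := by gcongr; linarith
      have h2 : (2:ℚ)/b ≤ ((t : ℚ) + 1) / b := by gcongr; linarith
      linarith
  have hmem2 : (1/a + 2/b : ℚ) ∈ {x : ℚ | ∃ s t : ℕ, x = ((s : ℚ) + 1) / a + ((t : ℚ) + 1) / b} :=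
    ⟨0, 1, by push_cast; ring⟩
  have hne2 : (1/a + 2/b : ℚ) ≠ ξ := by
    rw [hξeq]
    intro h
    have : (1:ℚ)/b = 2/b := by linarith
    have hb' : (b:ℚ) ≠ 0 := ne_of_gt hbQ
    field_simp at this
    norm_num at this
  have hψeq : ψ = 1/a + 2/b := by
    have h1 := hψmin _ hmem2 hne2
    obtain ⟨s, t, hst⟩ := hψ
    have hψne : ((s : ℚ) + 1) / a + ((t : ℚ) + 1) / b ≠ ξ := hst ▸ ne_of_gt hord.1
    have h2 := key s t hψne
    linarith [hst ▸ h2]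
  refine ⟨hξeq, hψeq, ?_⟩
  rw [hξeq, hψeq]
  have h : 2 * ((1:ℚ)/a + 1/b) - (1/a + 2/b) = 1/a := by ring
  rw [h, one_div_one_div]
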